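/- Let n ≥ 2 and let μ : Fin n → ℤ. Then Ã_D(μ) = Σ_{g ∈ W_D} sgn(g)·X^{g·μ} equals 0 in the group algebra if and only if |μ_i| = |μ_j| for some pair of distinct indices i ≠ j. -/

import Mathlib

open Finset

/-- The group `W_D` of even-signed permutations on `n` letters: pairs
`g = (σ, ε)` with `σ ∈ S_n` and `ε : Fin n → {±1}` satisfying
`ε_1⋯ε_n = 1` (the Weyl group of type `D_n`). -/
abbrev WD (n : ℕ) := {g : Equiv.Perm (Fin n) × (Fin n → ℤˣ) // (∏ i, g.2 i) = 1}

/-- The action of `g = (σ, ε) ∈ W_D` on tuples: `(g·μ)_i = ε_i · μ_{σ⁻¹(i)}`. -/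
def WDact (n : ℕ) (g : WD n) (μ : Fin n → ℤ) : Fin n → ℤ :=
  fun i => ((g.1.2 i : ℤ)) * μ (g.1.1⁻¹ i)

/-- The alternating sum `Ã_D(μ) = Σ_{g ∈ W_D} sgn(g)·X^{g·μ}` in the group
algebra `AddMonoidAlgebra ℤ (Fin n → ℤ)`, with `sgn(σ, ε) = sign σ`. -/
noncomputable def AtildeD (n : ℕ) (μ : Fin n → ℤ) : AddMonoidAlgebra ℤ (Fin n → ℤ) :=
  ∑ g : WD n, (Equiv.Perm.sign g.1.1 : ℤ) • AddMonoidAlgebra.single (WDact n g μ) 1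


def WDmul (n : ℕ) (g h : WD n) : WD n :=
  ⟨(g.1.1 * h.1.1, fun k => g.1.2 k * h.1.2 (g.1.1⁻¹ k)), by
    rw [Finset.prod_mul_distrib, g.2]
    rw [Fintype.prod_equiv g.1.1⁻¹ _ h.1.2 (fun k => rfl), h.2, one_mul]⟩

lemma WDact_mul (n : ℕ) (g h : WD n) (μ : Fin n → ℤ) :
    WDact n (WDmul n g h) μ = WDact n g (WDact n h μ) := by
  funext k
  simp [WDact, WDmul, mul_assoc]

lemma coeff_at (n : ℕ) (μ ν : Fin n → ℤ) :
    (AtildeD n μ).coeff ν = ∑ g : WD n, if WDact n g μ = ν then (Equiv.Perm.sign g.1.1 : ℤ) else 0 := by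
  rw [AtildeD, AddMonoidAlgebra.coeff_sum, Finset.sum_apply']
  refine Finset.sum_congr rfl fun g _ => ?_
  rw [AddMonoidAlgebra.coeff_smul, AddMonoidAlgebra.coeff_single, Finsupp.smul_apply, Finsupp.single_apply]
  split <;> simp

def WDone (n : ℕ) : WD n := ⟨(1, 1), by simp⟩

lemma abs_unit_mul (u : ℤˣ) (a : ℤ) : |(u : ℤ) * a| = |a| := by
  rcases Int.units_eq_one_or u with h | h <;> simp [h, abs_neg]

/-- Trivial stabilizer when all `|μ i|` are distinct. -/
lemma stab_triv (n : ℕ) (μ : Fin n → ℤ)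
    (hd : ∀ i j : Fin n, i ≠ j → |μ i| ≠ |μ j|) (g : WD n)
    (hg : WDact n g μ = μ) : g = WDone n := by
  have hact : ∀ k, (g.1.2 k : ℤ) * μ (g.1.1⁻¹ k) = μ k := fun k => congrFun hg k
  have hσ : ∀ k, g.1.1⁻¹ k = k := by
    intro k
    by_contra hne
    exact hd _ _ hne (by rw [← abs_unit_mul (g.1.2 k), hact k])
  have hσ1 : g.1.1 = 1 := by
    have h1 : g.1.1⁻¹ = 1 := Equiv.ext fun k => (hσ k).trans rfl
    exact inv_eq_one.mp h1
  have hε' : ∀ k, μ k ≠ 0 → g.1.2 k = 1 := by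
    intro k hk
    have := hact k
    rw [hσ k] at this
    have h2 : (g.1.2 k : ℤ) = 1 :=
      mul_right_cancel₀ hk (this.trans (one_mul (μ k)).symm)
    exact Units.ext h2
  have hε : ∀ k, g.1.2 k = 1 := by
    intro k
    by_cases hk : μ k = 0
    · have : ∏ i, g.1.2 i = g.1.2 k := by
        refine Finset.prod_eq_single k (fun j _ hj => ?_) (by simp)
        refine hε' j fun h0 => hd j k hj (by rw [h0, hk])
      rw [g.2] at this; exact this.symm
    · exact hε' k hk
  refine Subtype.ext (Prod.ext hσ1 (funext hε))

/-- Lemma 5.2 of the paper, type `D`.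
For `n ≥ 2` and `μ : Fin n → ℤ`, the alternating sum `Ã_D(μ)` vanishes in the
group algebra if and only if `|μ_i| = |μ_j|` for some pair of distinct
indices. -/
theorem stmt16 (n : ℕ) (hn : 2 ≤ n) (μ : Fin n → ℤ) :
    AtildeD n μ = 0 ↔ ∃ i j : Fin n, i ≠ j ∧ |μ i| = |μ j| := by
  constructor
  · -- contrapositive
    intro h0
    by_contra hex
    push_neg at hex
    have hcoeff : (AtildeD n μ).coeff μ = 1 := by
      rw [coeff_at]
      rw [Finset.sum_eq_single_of_mem (WDone n) (Finset.mem_univ _)]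
      · have h1 : WDact n (WDone n) μ = μ := by funext k; simp [WDact, WDone]
        rw [if_pos h1]; simp [WDone]
      · intro g _ hne
        rw [if_neg]
        intro hg
        exact hne (stab_triv n μ hex g hg)
    rw [h0] at hcoeff
    simp at hcoeff
  · rintro ⟨i, j, hij, habs⟩
    -- choose sign s with s * μ j = μ i and s * μ i = μ j
    obtain ⟨s, hs1, hs2⟩ : ∃ s : ℤˣ, (s : ℤ) * μ j = μ i ∧ (s : ℤ) * μ i = μ j := by
      rcases abs_eq_abs.mp habs with h | h
      · exact ⟨1, by simpa using h.symm, by simpa using h⟩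
      · exact ⟨-1, by simp [h], by simp [h, neg_eq_iff_eq_neg.mpr h]⟩
    set ε₀ : Fin n → ℤˣ := fun k => if k = i then s else if k = j then s else 1 with hε₀
    have hprod : ∏ k, ε₀ k = 1 := by
      rw [← Finset.mul_prod_erase univ ε₀ (mem_univ i),
        ← Finset.mul_prod_erase _ ε₀ (Finset.mem_erase.mpr ⟨hij.symm, mem_univ j⟩)]
      rw [Finset.prod_eq_one (fun k hk => ?_)]
      · have : ε₀ i = s := by simp [hε₀]
        have h2 : ε₀ j = s := by simp [hε₀, hij.symm]
        rw [this, h2, mul_one, Int.units_mul_self]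
      · simp only [Finset.mem_erase] at hk
        simp [hε₀, hk.1, hk.2.1]
    set g₀ : WD n := ⟨(Equiv.swap i j, ε₀), hprod⟩ with hg₀
    have hfix : WDact n g₀ μ = μ := by
      funext k
      show (ε₀ k : ℤ) * μ ((Equiv.swap i j)⁻¹ k) = μ k
      rw [Equiv.swap_inv]
      by_cases hki : k = i
      · subst hki; simp [hε₀, Equiv.swap_apply_left, hs1]
      · by_cases hkj : k = j
        · subst hkj; simp [hε₀, hij.symm, Equiv.swap_apply_right, hs2]
        · rw [Equiv.swap_apply_of_ne_of_ne hki hkj]; simp [hε₀, hki, hkj]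
    have hε₀sym : ∀ k, ε₀ (Equiv.swap i j k) = ε₀ k := by
      intro k
      by_cases hki : k = i
      · subst hki; simp [hε₀, Equiv.swap_apply_left, hij.symm]
      · by_cases hkj : k = j
        · subst hkj; simp [hε₀, hij.symm, Equiv.swap_apply_right]
        · rw [Equiv.swap_apply_of_ne_of_ne hki hkj]
    have hinv : Function.Involutive (fun g => WDmul n g g₀) := by
      intro g
      refine Subtype.ext (Prod.ext ?_ ?_)
      · show (g.1.1 * Equiv.swap i j) * Equiv.swap i j = g.1.1
        rw [mul_assoc, Equiv.swap_mul_self, mul_one]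
      · funext k
        show (g.1.2 k * ε₀ (g.1.1⁻¹ k)) * ε₀ ((g.1.1 * Equiv.swap i j)⁻¹ k) = g.1.2 k
        have : ((g.1.1 * Equiv.swap i j)⁻¹ : Equiv.Perm (Fin n)) k
            = (Equiv.swap i j) (g.1.1⁻¹ k) := by
          rw [mul_inv_rev, Equiv.Perm.mul_apply, Equiv.swap_inv]
        rw [this, hε₀sym, mul_assoc, Int.units_mul_self, mul_one]
    have hneg : AtildeD n μ = - AtildeD n μ := by
      nth_rewrite 1 [AtildeD]
      rw [Fintype.sum_equiv (Function.Involutive.toPerm _ hinv)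
        _ (fun g => -((Equiv.Perm.sign g.1.1 : ℤ) • AddMonoidAlgebra.single (WDact n g μ) 1))
        (fun g => ?_)]
      · rw [Finset.sum_neg_distrib, AtildeD]
      · show (Equiv.Perm.sign g.1.1 : ℤ) • AddMonoidAlgebra.single (WDact n g μ) 1
          = -((Equiv.Perm.sign (WDmul n g g₀).1.1 : ℤ) •
            AddMonoidAlgebra.single (WDact n (WDmul n g g₀) μ) 1)
        rw [WDact_mul, hfix]
        have : Equiv.Perm.sign (WDmul n g g₀).1.1 = - Equiv.Perm.sign g.1.1 := by
          show Equiv.Perm.sign (g.1.1 * Equiv.swap i j) = _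
          rw [Equiv.Perm.sign_mul, Equiv.Perm.sign_swap hij, mul_neg_one]
        rw [this]
        push_cast
        rw [neg_smul, neg_neg]
    have : AtildeD n μ + AtildeD n μ = 0 := by
      nth_rewrite 1 [hneg]; simp
    ext x
    have h3 : (AtildeD n μ + AtildeD n μ).coeff x = 0 := by rw [this]; rfl
    rw [AddMonoidAlgebra.coeff_add, Finsupp.add_apply] at h3
    simpa using by omega
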